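/- Let (A,e) be an order unit space and L a seminorm on A with L(a) = 0 iff a ∈ ℝe. Suppose the metric ρ_L(μ,ν) = sup { |μ(a) − ν(a)| : L(a) ≤ 1 } on the state space S(A) satisfies ρ_L ≤ C for some constant C (finite radius), and the set B₁ = { a : L(a) ≤ 1 and ‖a‖ ≤ 1 } is totally bounded in the order-unit norm. Then the topology on S(A) induced by ρ_L coincides with the weak-* topology. -/

import Mathlib

/- STATEMENT 2: Rieffel's criterion (Theorem 4.5 of "Metrics on state spaces"):
   if (A,L) has finite radius and the set {L ≤ 1, ‖·‖ ≤ 1} is totally bounded,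
   then the metric ρ_L induces the weak-* topology on the state space S(A). -/
theorem rieffel_criterion
    {A : Type*} [NormedAddCommGroup A] [NormedSpace ℝ A] [PartialOrder A]
    (hadd : ∀ a b c : A, a ≤ b → a + c ≤ b + c)
    (hsmul : ∀ (r : ℝ) (a : A), 0 ≤ r → 0 ≤ a → 0 ≤ r • a)
    (e : A)
    (horder : ∀ a : A, ∃ r : ℝ, a ≤ r • e)
    (harch : ∀ a : A, (∀ r : ℝ, 0 ≤ r → a ≤ r • e) → a ≤ 0)
    (hnorm : ∀ a : A, ‖a‖ = sInf {r : ℝ | -(r • e) ≤ a ∧ a ≤ r • e})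
    -- L is a seminorm vanishing exactly on ℝe
    (L : A → ℝ)
    (hL0 : ∀ a : A, L a = 0 ↔ ∃ t : ℝ, a = t • e)
    (hLhom : ∀ (t : ℝ) (a : A), L (t • a) = |t| * L a)
    (hLtri : ∀ a b : A, L (a + b) ≤ L a + L b)
    -- the state space, inside the weak-* dual
    (S : Set (WeakDual ℝ A))
    (hS : S = {μ : WeakDual ℝ A | μ e = 1 ∧ ∀ a : A, |μ a| ≤ ‖a‖})
    -- the metric ρ_L
    (ρ : S → S → ℝ)
    (hρ : ∀ μ ν : S, ρ μ ν = sSup {x : ℝ | ∃ a : A, L a ≤ 1 ∧ x = |(μ : WeakDual ℝ A) a - (ν : WeakDual ℝ A) a|})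
    -- (i) finite radius
    (C : ℝ)
    (hrad : ∀ μ ν : S, ∀ a : A, L a ≤ 1 → |(μ : WeakDual ℝ A) a - (ν : WeakDual ℝ A) a| ≤ C)
    -- (ii) the unit Lip/norm ball is totally bounded
    (hTB : TotallyBounded {a : A | L a ≤ 1 ∧ ‖a‖ ≤ 1}) :
    -- conclusion: the ρ_L-topology coincides with the (subspace) weak-* topology on S
    ∀ (F : Filter S) (μ : S),
      Filter.Tendsto id F (nhds μ) ↔ Filter.Tendsto (fun ν => ρ ν μ) F (nhds 0) := by
  intro F μ
  classical
  have hstate : ∀ ν : S, (ν : WeakDual ℝ A) e = 1 ∧ ∀ a : A, |(ν : WeakDual ℝ A) a| ≤ ‖a‖ := by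
    intro ν
    have h2 : (ν : WeakDual ℝ A) ∈ {μ : WeakDual ℝ A | μ e = 1 ∧ ∀ a : A, |μ a| ≤ ‖a‖} := by
      rw [← hS]
      exact ν.2
    exact h2
  have hmemS : ∀ σ : WeakDual ℝ A, σ e = 1 → (∀ a : A, |σ a| ≤ ‖a‖) → σ ∈ S := by
    intro σ h1 h2
    rw [hS]
    exact ⟨h1, h2⟩
  have hμe : (μ : WeakDual ℝ A) e = 1 := (hstate μ).1
  have hμn : ∀ a : A, |(μ : WeakDual ℝ A) a| ≤ ‖a‖ := (hstate μ).2
  have he0 : e ≠ 0 := by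
    have h2 : ∀ σ : WeakDual ℝ A, σ e = 1 → e ≠ 0 := by
      intro σ hσ h
      rw [h, map_zero] at hσ
      norm_num at hσ
    exact h2 _ hμe
  have henorm : (1 : ℝ) ≤ ‖e‖ := by
    have := hμn e
    rw [hμe] at this
    simpa using this
  -- a positive scalar multiple of a positive element can be rescaled back
  have hscale : ∀ (s : ℝ) (x : A), 0 < s → 0 ≤ s • x → 0 ≤ x := by
    intro s x hs hx
    have := hsmul s⁻¹ (s • x) (by positivity) hx
    rwa [smul_smul, inv_mul_cancel₀ hs.ne', one_smul] at this
  -- e is positive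
  have hepos : (0 : A) ≤ e := by
    have hTn : {r : ℝ | -(r • e) ≤ e ∧ e ≤ r • e}.Nonempty := by
      by_contra h
      rw [Set.not_nonempty_iff_eq_empty] at h
      have := hnorm e
      rw [h, Real.sInf_empty] at this
      linarith
    have hTb : BddBelow {r : ℝ | -(r • e) ≤ e ∧ e ≤ r • e} := by
      by_contra h
      have := hnorm e
      rw [Real.sInf_of_not_bddBelow h] at this
      linarith
    obtain ⟨r, hr⟩ := hTn
    have hr1 : (1 : ℝ) ≤ r := by
      have := csInf_le hTb hr
      rw [← hnorm e] at this
      linarith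
    have h0 : (0 : A) ≤ (1 + r) • e := by
      have := hadd (-(r • e)) e (r • e) hr.1
      rw [neg_add_cancel] at this
      calc (0 : A) ≤ e + r • e := this
        _ = (1 + r) • e := by rw [add_smul, one_smul]
    exact hscale (1 + r) e (by linarith) h0
  -- nonnegativity of scalars from positivity of multiples of e
  have hte : ∀ t : ℝ, 0 ≤ t • e → 0 ≤ t := by
    intro t ht
    by_contra h
    push_neg at h
    have h1 : (0 : A) ≤ (-t) • e := hsmul (-t) e (by linarith) hepos
    have h2 : t • e ≤ 0 := by
      have := hadd 0 ((-t) • e) (t • e) h1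
      rw [zero_add, neg_smul, neg_add_cancel] at this
      exact this
    have h3 : t • e = 0 := le_antisymm h2 ht
    have : e = 0 := by
      have := congrArg (fun x => t⁻¹ • x) h3
      simpa [smul_smul, inv_mul_cancel₀ (show t ≠ 0 by linarith)] using this
    exact he0 this
  -- sums of order bounds
  have hsum : ∀ (x y : A) (r s : ℝ), x ≤ r • e → y ≤ s • e → x + y ≤ (r + s) • e := by
    intro x y r s hx hy
    have h1 : x + y ≤ r • e + y := hadd x (r • e) y hx
    have h2 : y + r • e ≤ s • e + r • e := hadd y (s • e) (r • e) hy
    calc x + y ≤ r • e + y := h1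
      _ = y + r • e := by abel
      _ ≤ s • e + r • e := h2
      _ = (r + s) • e := by rw [add_smul]; abel
  -- upward closedness of order bounds
  have hup : ∀ (a : A) (r r' : ℝ), a ≤ r • e → r ≤ r' → a ≤ r' • e := by
    intro a r r' ha hr
    have h1 : (0 : A) ≤ (r' - r) • e := hsmul (r' - r) e (by linarith) hepos
    have h2 : a + 0 ≤ (r + (r' - r)) • e := hsum a 0 r (r' - r) ha h1
    simpa using h2
  -- flipping a bound on -x into a lower bound
  have hflip : ∀ (x : A) (m : ℝ), -x ≤ m • e → -(m • e) ≤ x := by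
    intro x m h
    have := hadd (-x) (m • e) (x - m • e) h
    rw [show -x + (x - m • e) = -(m • e) by abel, show m • e + (x - m • e) = x by abel] at this
    exact this
  -- the sublinear functional p
  set P : A → Set ℝ := fun a => {r : ℝ | a ≤ r • e} with hPdef
  set p : A → ℝ := fun a => sInf (P a) with hpdef
  have hPne : ∀ a, (P a).Nonempty := fun a => horder a
  have hPbdd : ∀ a, BddBelow (P a) := by
    intro a
    obtain ⟨s, hs⟩ := horder (-a)
    refine ⟨-s, fun r hr => ?_⟩
    have h0 : a + (-a) ≤ (r + s) • e := hsum a (-a) r s hr hs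
    rw [add_neg_cancel] at h0
    have := hte (r + s) h0
    linarith
  have hple : ∀ a r, r ∈ P a → p a ≤ r := fun a r hr => csInf_le (hPbdd a) hr
  have hlep : ∀ a (m : ℝ), (∀ r ∈ P a, m ≤ r) → m ≤ p a := fun a m h => le_csInf (hPne a) h
  -- p 0 = 0
  have hp0 : p 0 = 0 := by
    apply le_antisymm
    · exact hple 0 0 (by simp [hPdef])
    · exact hlep 0 0 fun r hr => hte r (by simpa [hPdef] using hr)
  -- subadditivity
  have hpadd : ∀ a b : A, p (a + b) ≤ p a + p b := by
    intro a b
    have h1 : ∀ r ∈ P a, ∀ s ∈ P b, p (a + b) ≤ r + s := fun r hr s hs =>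
      hple (a + b) (r + s) (hsum a b r s hr hs)
    have h2 : ∀ r ∈ P a, p (a + b) - r ≤ p b := fun r hr =>
      hlep b _ fun s hs => by linarith [h1 r hr s hs]
    have h3 : p (a + b) - p b ≤ p a := hlep a _ fun r hr => by linarith [h2 r hr]
    linarith
  -- positive homogeneity (one direction suffices, then both)
  have hphom_le : ∀ (c : ℝ), 0 < c → ∀ a, p (c • a) ≤ c * p a := by
    intro c hc a
    have h1 : ∀ r ∈ P a, p (c • a) ≤ c * r := by
      intro r hr
      apply hple
      have h0 : (0 : A) ≤ r • e - a := by
        have := hadd a (r • e) (-a) hr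
        rwa [add_neg_cancel, ← sub_eq_add_neg] at this
      have h2 : (0 : A) ≤ c • (r • e - a) := hsmul c _ hc.le h0
      rw [smul_sub, smul_smul] at h2
      have := hadd 0 ((c * r) • e - c • a) (c • a) h2
      rw [zero_add, sub_add_cancel] at this
      exact this
    have h2 : c⁻¹ * p (c • a) ≤ p a := by
      apply hlep
      intro r hr
      have := h1 r hr
      calc c⁻¹ * p (c • a) ≤ c⁻¹ * (c * r) := by
            apply mul_le_mul_of_nonneg_left this (by positivity)
        _ = r := by field_simp
    calc p (c • a) = c * (c⁻¹ * p (c • a)) := by field_simp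
      _ ≤ c * p a := mul_le_mul_of_nonneg_left h2 hc.le
  have hphom : ∀ (c : ℝ), 0 < c → ∀ a, p (c • a) = c * p a := by
    intro c hc a
    refine le_antisymm (hphom_le c hc a) ?_
    have := hphom_le c⁻¹ (by positivity) (c • a)
    rw [smul_smul, inv_mul_cancel₀ hc.ne', one_smul] at this
    calc c * p a ≤ c * (c⁻¹ * p (c • a)) := mul_le_mul_of_nonneg_left this hc.le
      _ = p (c • a) := by field_simp
  -- p b + p (-b) ≥ 0
  have hpnn : ∀ b : A, 0 ≤ p b + p (-b) := by
    intro b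
    have := hpadd b (-b)
    rw [add_neg_cancel, hp0] at this
    linarith
  -- p e = 1, p (-e) = -1
  have hpe : p e = 1 := by
    apply le_antisymm
    · exact hple e 1 (by simp [hPdef])
    · apply hlep
      intro r hr
      have h0 : (0 : A) ≤ (r - 1) • e := by
        have := hadd e (r • e) (-e) hr
        rw [add_neg_cancel] at this
        calc (0 : A) ≤ r • e + -e := this
          _ = (r - 1) • e := by rw [sub_smul, one_smul, sub_eq_add_neg]
      have := hte (r - 1) h0
      linarith
  have hpne : p (-e) = -1 := by
    apply le_antisymm
    · apply hple
      show -e ≤ (-1 : ℝ) • e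
      simp
    · apply hlep
      intro r hr
      have h0 : (0 : A) ≤ (r + 1) • e := by
        have := hadd (-e) (r • e) e hr
        rw [neg_add_cancel] at this
        calc (0 : A) ≤ r • e + e := this
          _ = (r + 1) • e := by rw [add_smul, one_smul]
      have := hte (r + 1) h0
      linarith
  -- p a ≤ ‖a‖
  have hp_norm : ∀ a : A, p a ≤ ‖a‖ := by
    intro a
    rw [hnorm a]
    apply csInf_le_csInf (hPbdd a)
    · obtain ⟨r, hr⟩ := horder a
      obtain ⟨s, hs⟩ := horder (-a)
      refine ⟨max r s, hflip a (max r s) (hup (-a) s _ hs (le_max_right r s)), ?_⟩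
      exact hup a r _ hr (le_max_left r s)
    · intro r hr
      exact hr.2
  -- ‖b‖ ≤ max (p b) (p (-b)) in the limit
  have hnorm_le : ∀ (b : A) (M : ℝ), p b ≤ M → p (-b) ≤ M → ‖b‖ ≤ M := by
    intro b M h1 h2
    apply le_of_forall_sub_le
    intro ε hε
    obtain ⟨r, hr, hrlt⟩ := exists_lt_of_csInf_lt (hPne b) (show p b < p b + ε by linarith)
    obtain ⟨s, hs, hslt⟩ := exists_lt_of_csInf_lt (hPne (-b)) (show p (-b) < p (-b) + ε by linarith)
    have hm : ‖b‖ ≤ max r s := by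
      rw [hnorm b]
      apply csInf_le
      · exact BddBelow.mono (fun x hx => hx.2) (hPbdd b)
      · exact ⟨hflip b _ (hup (-b) s _ hs (le_max_right r s)), hup b r _ hr (le_max_left r s)⟩
    have : max r s < M + ε := max_lt (by linarith) (by linarith)
    linarith
  -- Hahn-Banach: states attaining p
  have hHB : ∀ b : A, ∃ σ : WeakDual ℝ A, σ ∈ S ∧ σ b = p b := by
    intro b
    by_cases hb : b = 0
    · exact ⟨μ, μ.2, by rw [hb, map_zero, hp0]⟩
    · have hf : ∀ x : (LinearPMap.mkSpanSingleton (K := ℝ) (σ := RingHom.id ℝ) b (p b) hb).domain,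
          (LinearPMap.mkSpanSingleton (K := ℝ) (σ := RingHom.id ℝ) b (p b) hb) x ≤ p x := by
        rintro ⟨x, hx⟩
        obtain ⟨t, rfl⟩ := Submodule.mem_span_singleton.1 hx
        rw [LinearPMap.mkSpanSingleton'_apply]
        rcases lt_trichotomy t 0 with ht | ht | ht
        · have h1 : p (t • b) = -t * p (-b) := by
            have := hphom (-t) (by linarith) (-b)
            rwa [smul_neg, neg_smul, neg_neg] at this
          rw [h1]
          have := hpnn b
          have h2 : t * p b ≤ -t * p (-b) := by nlinarith
          simpa [smul_eq_mul] using h2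
        · simp [ht, hp0]
        · rw [hphom t ht b]
          simp [smul_eq_mul]
      obtain ⟨g, hg1, hg2⟩ := exists_extension_of_le_sublinear
        (LinearPMap.mkSpanSingleton (K := ℝ) (σ := RingHom.id ℝ) b (p b) hb) p hphom hpadd hf
      -- g e = 1
      · have hge : g e = 1 := by
          have h1 : g e ≤ 1 := by
            have := hg2 e
            rwa [hpe] at this
          have h2 : g (-e) ≤ -1 := by
            have := hg2 (-e)
            rwa [hpne] at this
          rw [map_neg] at h2
          linarith
        have hgb : ∀ a : A, |g a| ≤ ‖a‖ := by
          intro a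
          rw [abs_le]
          constructor
          · have := hg2 (-a)
            rw [map_neg] at this
            have h2 := hp_norm (-a)
            rw [norm_neg] at h2
            linarith
          · exact (hg2 a).trans (hp_norm a)
        refine ⟨(LinearMap.mkContinuous g 1 (fun a => by
          rw [one_mul, Real.norm_eq_abs]; exact hgb a) : A →L[ℝ] ℝ), hmemS _ hge hgb, ?_⟩
        have h3 := hg1 ⟨b, Submodule.mem_span_singleton_self b⟩
        rw [LinearPMap.mkSpanSingleton_apply] at h3
        exact h3
  -- key norm bound from states
  have hnormK : ∀ (b : A) (M : ℝ),
      (∀ σ : WeakDual ℝ A, σ ∈ S → |σ b| ≤ M) → ‖b‖ ≤ M := by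
    intro b M hM
    obtain ⟨σ1, hσ1, hσ1b⟩ := hHB b
    obtain ⟨σ2, hσ2, hσ2b⟩ := hHB (-b)
    apply hnorm_le
    · calc p b = σ1 b := hσ1b.symm
        _ ≤ |σ1 b| := le_abs_self _
        _ ≤ M := hM σ1 hσ1
    · calc p (-b) = σ2 (-b) := hσ2b.symm
        _ ≤ |σ2 (-b)| := le_abs_self _
        _ = |σ2 b| := by rw [map_neg, abs_neg]
        _ ≤ M := hM σ2 hσ2
  -- basic facts about L
  have hLe : L e = 0 := (hL0 e).2 ⟨1, (one_smul ℝ e).symm⟩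
  have hL0' : L 0 = 0 := by
    have := hLhom 0 0
    simpa using this
  have hLnn : ∀ a : A, 0 ≤ L a := by
    intro a
    have h1 := hLtri a (-a)
    have h2 : L (-a) = L a := by
      have := hLhom (-1) a
      simpa using this
    rw [add_neg_cancel, hL0'] at h1
    linarith
  -- the sup set for ρ
  have hXne : ∀ ν : S,
      {x : ℝ | ∃ a : A, L a ≤ 1 ∧ x = |(ν : WeakDual ℝ A) a - (μ : WeakDual ℝ A) a|}.Nonempty := by
    intro ν
    exact ⟨0, 0, by rw [hL0']; norm_num⟩
  have hXbdd : ∀ ν : S,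
      BddAbove {x : ℝ | ∃ a : A, L a ≤ 1 ∧ x = |(ν : WeakDual ℝ A) a - (μ : WeakDual ℝ A) a|} := by
    intro ν
    exact ⟨C, by rintro x ⟨a, ha, rfl⟩; exact hrad ν μ a ha⟩
  have hρnn : ∀ ν : S, 0 ≤ ρ ν μ := by
    intro ν
    rw [hρ ν μ]
    exact le_csSup (hXbdd ν) ⟨0, by rw [hL0']; norm_num⟩
  have hρge : ∀ ν : S, ∀ a : A, L a ≤ 1 → |(ν : WeakDual ℝ A) a - (μ : WeakDual ℝ A) a| ≤ ρ ν μ := by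
    intro ν a ha
    rw [hρ ν μ]
    exact le_csSup (hXbdd ν) ⟨a, ha, rfl⟩
  -- characterize weak-* convergence
  have hkey : Filter.Tendsto id F (nhds μ) ↔
      ∀ a : A, Filter.Tendsto (fun ν : S => (ν : WeakDual ℝ A) a) F
        (nhds ((μ : WeakDual ℝ A) a)) := by
    rw [tendsto_subtype_rng]
    rw [tendsto_iff_forall_eval_tendsto_topDualPairing]
    rfl
  constructor
  · -- weak-* convergence implies ρ-convergence
    intro h
    rw [hkey] at h
    rw [NormedAddCommGroup.tendsto_nhds_zero]
    intro ε hε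
    set D : ℝ := max C 1 with hD
    have hD1 : (1 : ℝ) ≤ D := le_max_right C 1
    have hDpos : (0 : ℝ) < D := by linarith
    have hCD : C ≤ D := le_max_left C 1
    have hε' : (0 : ℝ) < ε / (8 * D) := by positivity
    obtain ⟨t, htf, htc⟩ := Metric.totallyBounded_iff.1 hTB (ε / (8 * D)) hε'
    have hev : ∀ᶠ (ν : S) in F, ∀ y ∈ t, |(ν : WeakDual ℝ A) (D • y) - (μ : WeakDual ℝ A) (D • y)| < ε / 8 := by
      rw [Set.Finite.eventually_all htf]
      intro y _
      have := Metric.tendsto_nhds.1 (h (D • y)) (ε / 8) (by positivity)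
      simpa [Real.dist_eq] using this
    filter_upwards [hev] with ν hν
    rw [Real.norm_eq_abs, abs_of_nonneg (hρnn ν)]
    have hbound : ∀ a : A, L a ≤ 1 →
        |(ν : WeakDual ℝ A) a - (μ : WeakDual ℝ A) a| ≤ ε / 2 := by
      intro a ha
      set b : A := a - ((μ : WeakDual ℝ A) a) • e with hbdef
      have hLb : L b ≤ 1 := by
        have h1 : L b ≤ L a + L ((-(((μ : WeakDual ℝ A) a))) • e) := by
          have := hLtri a ((-(((μ : WeakDual ℝ A) a))) • e)
          rwa [show a + (-(((μ : WeakDual ℝ A) a))) • e = b by rw [hbdef, neg_smul]; abel] at this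
        rw [hLhom, hLe, mul_zero, add_zero] at h1
        exact h1.trans ha
      have hμb : (μ : WeakDual ℝ A) b = 0 := by
        rw [hbdef, map_sub, map_smul, hμe, smul_eq_mul, mul_one, sub_self]
      have hνb : (ν : WeakDual ℝ A) b = (ν : WeakDual ℝ A) a - (μ : WeakDual ℝ A) a := by
        rw [hbdef, map_sub, map_smul, (hstate ν).1, smul_eq_mul, mul_one]
      -- b has norm at most C
      have hbn : ‖b‖ ≤ C := by
        apply hnormK
        intro σ hσ
        have hσb : σ b = σ a - (μ : WeakDual ℝ A) a := by
          have hσe : σ e = 1 := by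
            have := hσ
            rw [hS] at this
            exact this.1
          rw [hbdef, map_sub, map_smul, hσe, smul_eq_mul, mul_one]
        rw [hσb]
        exact hrad ⟨σ, hσ⟩ μ a ha
      -- rescale into the totally bounded set
      have hmem : D⁻¹ • b ∈ {a : A | L a ≤ 1 ∧ ‖a‖ ≤ 1} := by
        constructor
        · rw [hLhom, abs_of_pos (by positivity : (0:ℝ) < D⁻¹)]
          calc D⁻¹ * L b ≤ D⁻¹ * 1 := by
                apply mul_le_mul_of_nonneg_left hLb (by positivity)
            _ ≤ 1 := by rw [mul_one]; exact inv_le_one_of_one_le₀ hD1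
        · rw [norm_smul, Real.norm_eq_abs, abs_of_pos (by positivity : (0:ℝ) < D⁻¹)]
          calc D⁻¹ * ‖b‖ ≤ D⁻¹ * D := by
                apply mul_le_mul_of_nonneg_left (hbn.trans hCD) (by positivity)
            _ = 1 := inv_mul_cancel₀ hDpos.ne'
      obtain ⟨y, hy, hyb⟩ := Set.mem_iUnion₂.1 (htc hmem)
      have hclose : ‖b - D • y‖ < ε / 8 := by
        have h1 : b - D • y = D • (D⁻¹ • b - y) := by
          rw [smul_sub, smul_smul, mul_inv_cancel₀ hDpos.ne', one_smul]
        rw [h1, norm_smul, Real.norm_eq_abs, abs_of_pos hDpos]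
        have h2 : ‖D⁻¹ • b - y‖ < ε / (8 * D) := by
          rw [← dist_eq_norm]
          exact Metric.mem_ball.1 hyb
        calc D * ‖D⁻¹ • b - y‖ < D * (ε / (8 * D)) := by
              exact mul_lt_mul_of_pos_left h2 hDpos
          _ = ε / 8 := by field_simp
      have hterm1 : |(ν : WeakDual ℝ A) (b - D • y)| < ε / 8 :=
        lt_of_le_of_lt ((hstate ν).2 _) hclose
      have hterm3 : |(μ : WeakDual ℝ A) (D • y)| < ε / 8 := by
        have h1 : (μ : WeakDual ℝ A) (D • y) = -((μ : WeakDual ℝ A) (b - D • y)) := by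
          rw [map_sub, hμb, zero_sub, neg_neg]
        rw [h1, abs_neg]
        exact lt_of_le_of_lt (hμn _) hclose
      have hterm2 := hν y hy
      have hsplit : (ν : WeakDual ℝ A) b = (ν : WeakDual ℝ A) (b - D • y)
          + ((ν : WeakDual ℝ A) (D • y) - (μ : WeakDual ℝ A) (D • y))
          + (μ : WeakDual ℝ A) (D • y) := by
        have h4 : (ν : WeakDual ℝ A) b = (ν : WeakDual ℝ A) (b - D • y)
            + (ν : WeakDual ℝ A) (D • y) := by
          rw [← map_add]
          congr 1
          abel
        rw [h4]; ring
      rw [← hνb, hsplit]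
      calc |((ν : WeakDual ℝ A) (b - D • y)
          + ((ν : WeakDual ℝ A) (D • y) - (μ : WeakDual ℝ A) (D • y))
          + (μ : WeakDual ℝ A) (D • y))|
          ≤ |(ν : WeakDual ℝ A) (b - D • y)
            + ((ν : WeakDual ℝ A) (D • y) - (μ : WeakDual ℝ A) (D • y))|
            + |(μ : WeakDual ℝ A) (D • y)| := abs_add_le _ _
        _ ≤ |(ν : WeakDual ℝ A) (b - D • y)|
            + |(ν : WeakDual ℝ A) (D • y) - (μ : WeakDual ℝ A) (D • y)|
            + |(μ : WeakDual ℝ A) (D • y)| := by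
              have := abs_add_le ((ν : WeakDual ℝ A) (b - D • y))
                ((ν : WeakDual ℝ A) (D • y) - (μ : WeakDual ℝ A) (D • y))
              linarith
        _ ≤ ε / 2 := by linarith
    have : ρ ν μ ≤ ε / 2 := by
      rw [hρ ν μ]
      apply csSup_le (hXne ν)
      rintro x ⟨a, ha, rfl⟩
      exact hbound a ha
    linarith
  · -- ρ-convergence implies weak-* convergence
    intro h
    rw [hkey]
    intro a
    by_cases hLa : L a = 0
    · obtain ⟨s, rfl⟩ := (hL0 a).1 hLa
      have hconst : ∀ ν : S, (ν : WeakDual ℝ A) (s • e) = s := by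
        intro ν
        rw [map_smul, (hstate ν).1, smul_eq_mul, mul_one]
      simp only [hconst]
      exact tendsto_const_nhds
    · have hLpos : 0 < L a := lt_of_le_of_ne (hLnn a) (Ne.symm hLa)
      rw [tendsto_iff_norm_sub_tendsto_zero]
      apply squeeze_zero (fun ν => norm_nonneg _) (g := fun ν => L a * ρ ν μ)
      · intro ν
        have h1 : L ((L a)⁻¹ • a) ≤ 1 := by
          rw [hLhom, abs_of_pos (by positivity : (0:ℝ) < (L a)⁻¹), inv_mul_cancel₀ hLa]
        have h2 := hρge ν ((L a)⁻¹ • a) h1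
        rw [map_smul, map_smul, smul_eq_mul, smul_eq_mul, ← mul_sub, abs_mul,
          abs_of_pos (by positivity : (0:ℝ) < (L a)⁻¹)] at h2
        rw [Real.norm_eq_abs]
        calc |(ν : WeakDual ℝ A) a - (μ : WeakDual ℝ A) a|
            = L a * ((L a)⁻¹ * |(ν : WeakDual ℝ A) a - (μ : WeakDual ℝ A) a|) := by
              field_simp
          _ ≤ L a * ρ ν μ := mul_le_mul_of_nonneg_left h2 (hLnn a)
      · have := h.const_mul (L a)
        simpa using this
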